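/- Let β ∈ (−π/2, π/2), let 0 < α₀ ≤ (π/2 − β)/2, and let α ∈ (0, α₀). Define q(u) := (u − sin(β−α))/(u − sin(β+α)) for u ≥ 1. Then for all u ≥ 1: (1/2)·log q(1) ≥ (1/2)·log q(u) ≥ (1/2)·log q(1) · (1 − cos α₀)/(u − cos α₀). -/

import Mathlib

open Real

lemma key_int (x y w : ℝ) (hxw : x < w) (hyw : y < w) :
    Real.log ((w - x) / (w - y)) = ∫ t in x..y, (w - t)⁻¹ := by
  rw [intervalIntegral.integral_comp_sub_left (fun s => s⁻¹) w]
  rw [integral_inv (Set.notMem_uIcc_of_lt (by linarith) (by linarith))]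

theorem stmt3 (β α₀ α : ℝ)
    (hβ : β ∈ Set.Ioo (-(π/2)) (π/2))
    (hα₀ : 0 < α₀) (hα₀' : α₀ ≤ (π/2 - β)/2)
    (hα : α ∈ Set.Ioo 0 α₀)
    (q : ℝ → ℝ) (hq : ∀ u, q u = (u - Real.sin (β - α)) / (u - Real.sin (β + α))) :
    ∀ u : ℝ, 1 ≤ u →
      (1/2) * Real.log (q u) ≤ (1/2) * Real.log (q 1) ∧
      (1/2) * Real.log (q 1) * ((1 - Real.cos α₀) / (u - Real.cos α₀)) ≤
        (1/2) * Real.log (q u) := by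
  obtain ⟨hβ1, hβ2⟩ := hβ
  obtain ⟨hα1, hα2⟩ := hα
  have hpi := Real.pi_pos
  set a := Real.sin (β - α) with ha_def
  set b := Real.sin (β + α) with hb_def
  set c := Real.cos α₀ with hc_def
  have hcosβ : 0 < Real.cos β := Real.cos_pos_of_mem_Ioo ⟨hβ1, hβ2⟩
  have hsinα : 0 < Real.sin α :=
    Real.sin_pos_of_pos_of_lt_pi hα1 (by linarith)
  have hab : a < b := by
    have h := Real.sin_sub_sin (β + α) (β - α)
    have h1 : (β + α - (β - α))/2 = α := by ring
    have h2 : (β + α + (β - α))/2 = β := by ring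
    rw [h1, h2] at h
    nlinarith
  have hbc : b < c := by
    have h1 : b < Real.sin (β + α₀) := by
      apply Real.strictMonoOn_sin ⟨by linarith, by linarith⟩ ⟨by linarith, by linarith⟩
      linarith
    have h2 : Real.sin (β + α₀) ≤ Real.sin (π/2 - α₀) := by
      apply Real.strictMonoOn_sin.monotoneOn ⟨by linarith, by linarith⟩
        ⟨by linarith, by linarith⟩ (by linarith)
    rw [Real.sin_pi_div_two_sub] at h2
    linarith
  have hc1 : c < 1 := by
    have : Real.cos α₀ < Real.cos 0 := by
      apply Real.cos_lt_cos_of_nonneg_of_le_pi le_rfl (by linarith) hα₀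
    simpa using this
  -- integral representation
  have hrep : ∀ w : ℝ, 1 ≤ w → Real.log (q w) = ∫ t in a..b, (w - t)⁻¹ := by
    intro w hw
    rw [hq]
    exact key_int a b w (by linarith) (by linarith)
  have hint : ∀ w : ℝ, 1 ≤ w → IntervalIntegrable (fun t => (w - t)⁻¹)
      MeasureTheory.volume a b := by
    intro w hw
    apply ContinuousOn.intervalIntegrable
    apply ContinuousOn.inv₀ ((continuous_const.sub continuous_id).continuousOn)
    intro t ht
    rw [Set.uIcc_of_le hab.le] at ht
    have : t ≤ b := ht.2
    simp only [Pi.sub_apply, id_eq]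
    intro h
    have : w = t := by linarith [sub_eq_zero.mp h]
    linarith
  intro u hu
  have hbu : b < u := by linarith
  have h1 : Real.log (q u) ≤ Real.log (q 1) := by
    rw [hrep u hu, hrep 1 le_rfl]
    apply intervalIntegral.integral_mono_on hab.le (hint u hu) (hint 1 le_rfl)
    intro t ht
    have ht2 : t ≤ b := ht.2
    have h1t : 0 < 1 - t := by linarith
    have : (1:ℝ) - t ≤ u - t := by linarith
    gcongr
  have key2 : Real.log (q 1) * (1 - c) ≤ Real.log (q u) * (u - c) := by
    rw [hrep 1 le_rfl, hrep u hu, ← intervalIntegral.integral_mul_const,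
      ← intervalIntegral.integral_mul_const]
    apply intervalIntegral.integral_mono_on hab.le ((hint 1 le_rfl).mul_const _)
      ((hint u hu).mul_const _)
    intro t ht
    have ht2 : t ≤ b := ht.2
    have h1t : 0 < 1 - t := by linarith
    have hut : 0 < u - t := by linarith
    show (1 - t)⁻¹ * (1 - c) ≤ (u - t)⁻¹ * (u - c)
    rw [inv_mul_eq_div, inv_mul_eq_div, div_le_div_iff₀ h1t hut]
    nlinarith [mul_nonneg (by linarith : (0:ℝ) ≤ c - t) (by linarith : (0:ℝ) ≤ u - 1)]
  have hcu : 0 < u - c := by linarith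
  have h2 : Real.log (q 1) * ((1 - c) / (u - c)) ≤ Real.log (q u) := by
    rw [← mul_div_assoc, div_le_iff₀ hcu]
    exact key2
  constructor
  · linarith
  · calc (1/2) * Real.log (q 1) * ((1 - c) / (u - c))
        = (1/2) * (Real.log (q 1) * ((1 - c) / (u - c))) := by ring
      _ ≤ (1/2) * Real.log (q u) := by linarith
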